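/- Let X be a paracompact Hausdorff space with an open cover (Uᵢ)_{i ∈ I}, and for each i let fᵢ : W|_{Uᵢ} → Eᵢ be a continuous fiberwise-injective vector bundle morphism from the restriction of a vector bundle W to a trivial bundle Uᵢ × ℝ^{nᵢ}, where I is finite. Then there is a continuous fiberwise-injective vector bundle morphism W → X × ℝ^N with N = Σᵢ nᵢ; consequently W is a direct summand of the trivial bundle X × ℝ^N. -/

import Mathlib

open Bundle Set Function Matrix


private theorem contOn_matrix_mul {X l m n : Type*} [TopologicalSpace X] [Fintype m]
    {A : X → Matrix l m ℝ} {B : X → Matrix m n ℝ} {s : Set X}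
    (hA : ContinuousOn A s) (hB : ContinuousOn B s) :
    ContinuousOn (fun x => A x * B x) s :=
  (continuous_fst.matrix_mul continuous_snd).comp_continuousOn (hA.prodMk hB)

private theorem contOn_matrix_det {X n : Type*} [TopologicalSpace X] [Fintype n] [DecidableEq n]
    {A : X → Matrix n n ℝ} {s : Set X} (hA : ContinuousOn A s) :
    ContinuousOn (fun x => (A x).det) s :=
  (continuous_id.matrix_det).comp_continuousOn hA

private theorem contOn_matrix_adjugate {X n : Type*} [TopologicalSpace X] [Fintype n]
    [DecidableEq n] {A : X → Matrix n n ℝ} {s : Set X} (hA : ContinuousOn A s) :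
    ContinuousOn (fun x => (A x).adjugate) s :=
  (continuous_id.matrix_adjugate).comp_continuousOn hA

private theorem contOn_matrix_transpose {X l m : Type*} [TopologicalSpace X]
    {A : X → Matrix l m ℝ} {s : Set X} (hA : ContinuousOn A s) :
    ContinuousOn (fun x => (A x)ᵀ) s :=
  (continuous_id.matrix_transpose).comp_continuousOn hA

private theorem contOn_matrix_mulVec {X l m : Type*} [TopologicalSpace X] [Fintype m]
    {A : X → Matrix l m ℝ} {B : X → m → ℝ} {s : Set X}
    (hA : ContinuousOn A s) (hB : ContinuousOn B s) :
    ContinuousOn (fun x => A x *ᵥ B x) s :=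
  (continuous_fst.matrix_mulVec continuous_snd).comp_continuousOn (hA.prodMk hB)

set_option maxHeartbeats 1000000 in
theorem stmt19_local {X F : Type*} [TopologicalSpace X]
    [NormedAddCommGroup F] [NormedSpace ℝ F] [FiniteDimensional ℝ F]
    (W : X → Type*) [∀ x, AddCommGroup (W x)] [∀ x, Module ℝ (W x)]
    [∀ x, TopologicalSpace (W x)] [TopologicalSpace (Bundle.TotalSpace F W)]
    [FiberBundle F W] [VectorBundle ℝ F W]
    {N : ℕ} (g : ∀ x : X, W x →ₗ[ℝ] (Fin N → ℝ))
    (hgc : Continuous (fun p : Bundle.TotalSpace F W => (p.proj, g p.proj p.2)))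
    (hginj : ∀ x, Function.Injective (g x)) (x₀ : X) :
    ∃ V : Set X, IsOpen V ∧ x₀ ∈ V ∧ ∃ ρ : ∀ x : X, (Fin N → ℝ) →ₗ[ℝ] W x,
      ContinuousOn (fun q : X × (Fin N → ℝ) =>
        (Bundle.TotalSpace.mk q.1 (ρ q.1 q.2) : Bundle.TotalSpace F W)) (V ×ˢ univ) ∧
      ∀ x ∈ V, ∀ w : W x, ρ x (g x w) = w := by
  classical
  set d := Module.finrank ℝ F with hd
  set b : Module.Basis (Fin d) ℝ F := Module.finBasis ℝ F with hb
  set e : Trivialization F (Bundle.TotalSpace.proj : Bundle.TotalSpace F W → X) :=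
    trivializationAt F W x₀ with he
  -- the matrix of g x ∘ (e.symm x) in basis b
  set M : X → Matrix (Fin N) (Fin d) ℝ :=
    fun x => Matrix.of fun j k => g x (e.symmₗ ℝ x (b k)) j with hM
  have key : ∀ x (c : Fin d → ℝ),
      M x *ᵥ c = g x (e.symmₗ ℝ x (b.equivFun.symm c)) := by
    intro x c
    funext j
    rw [Module.Basis.equivFun_symm_apply]
    simp only [map_sum, _root_.map_smul]
    simp [hM, Matrix.mulVec, dotProduct, Finset.sum_apply, mul_comm]
  -- continuity of M on baseSet
  have hMcont : ContinuousOn M e.baseSet := by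
    apply continuousOn_pi.2
    intro j
    apply continuousOn_pi.2
    intro k
    have h1 : ContinuousOn (fun x : X =>
        (Bundle.TotalSpace.mk x (e.symm x (b k)) : Bundle.TotalSpace F W)) e.baseSet := by
      have := e.continuousOn_symm
      exact this.comp (Continuous.continuousOn (continuous_id.prodMk continuous_const))
        (fun x hx => by exact ⟨hx, trivial⟩)
    have h2 : Continuous (fun p : Bundle.TotalSpace F W => g p.proj p.2 j) :=
      (continuous_apply j).comp (continuous_snd.comp hgc)
    refine (h2.comp_continuousOn h1).congr ?_
    intro x hx
    simp [hM, e.coe_symmₗ hx]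
  set A : X → Matrix (Fin d) (Fin d) ℝ := fun x => (M x)ᵀ * M x with hA
  have hAcont : ContinuousOn A e.baseSet :=
    contOn_matrix_mul (contOn_matrix_transpose hMcont) hMcont
  have hdet : ContinuousOn (fun x => (A x).det) e.baseSet :=
    contOn_matrix_det hAcont
  set V : Set X := e.baseSet ∩ (fun x => (A x).det) ⁻¹' {(0:ℝ)}ᶜ with hV
  have hVopen : IsOpen V :=
    hdet.isOpen_inter_preimage e.open_baseSet isOpen_compl_singleton
  have hVbase : ∀ x ∈ V, x ∈ e.baseSet := fun x hx => hx.1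
  have hVdet : ∀ x ∈ V, (A x).det ≠ 0 := fun x hx => hx.2
  have hx₀base : x₀ ∈ e.baseSet := FiberBundle.mem_baseSet_trivializationAt F W x₀
  have hx₀V : x₀ ∈ V := by
    refine ⟨hx₀base, ?_⟩
    have hMinj : Function.Injective ((M x₀).mulVecLin) := by
      intro c c' hcc
      simp only [mulVecLin_apply, key] at hcc
      have h1 := hginj x₀ hcc
      have hs : Function.Injective (e.symmₗ ℝ x₀) := by
        intro u u' huu
        have := congrArg (e.linearMapAt ℝ x₀) huu
        rwa [e.linearMapAt_symmₗ hx₀base, e.linearMapAt_symmₗ hx₀base] at this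
      exact b.equivFun.symm.injective (hs h1)
    have hAinj : Function.Injective ((A x₀).mulVecLin) := by
      have hker : LinearMap.ker ((A x₀).mulVecLin) = ⊥ := by
        rw [hA, Matrix.ker_mulVecLin_transpose_mul_self, LinearMap.ker_eq_bot]
        exact hMinj
      exact LinearMap.ker_eq_bot.1 hker
    have : Function.Injective ((A x₀).mulVec) := hAinj
    have hu : IsUnit (A x₀) := Matrix.mulVec_injective_iff_isUnit.1 this
    intro h0
    exact ((Matrix.isUnit_iff_isUnit_det _).1 hu).ne_zero (by simpa using h0)
  -- the pseudo-inverse matrix family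
  set S : X → Matrix (Fin d) (Fin N) ℝ :=
    fun x => ((A x).det)⁻¹ • ((A x).adjugate * (M x)ᵀ) with hS
  have hScont : ContinuousOn S V := by
    have hadj : ContinuousOn (fun x => (A x).adjugate) e.baseSet :=
      contOn_matrix_adjugate hAcont
    have hprod : ContinuousOn (fun x => (A x).adjugate * (M x)ᵀ) e.baseSet :=
      contOn_matrix_mul hadj (contOn_matrix_transpose hMcont)
    have hinv : ContinuousOn (fun x => ((A x).det)⁻¹) V :=
      ContinuousOn.inv₀ (hdet.mono inter_subset_left) hVdet
    exact hinv.smul (hprod.mono inter_subset_left)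
  have hSM : ∀ x ∈ V, S x * M x = 1 := by
    intro x hx
    rw [hS]
    simp only
    rw [Matrix.smul_mul, Matrix.mul_assoc, show (M x)ᵀ * M x = A x from rfl,
      Matrix.adjugate_mul, smul_smul, inv_mul_cancel₀ (hVdet x hx), one_smul]
  -- the left inverse
  set ρ : ∀ x : X, (Fin N → ℝ) →ₗ[ℝ] W x := fun x =>
    (e.symmₗ ℝ x) ∘ₗ (b.equivFun.symm : (Fin d → ℝ) →ₗ[ℝ] F) ∘ₗ (S x).mulVecLin with hρ
  refine ⟨V, hVopen, hx₀V, ρ, ?_, ?_⟩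
  · -- continuity
    have hinner : ContinuousOn (fun q : X × (Fin N → ℝ) =>
        (q.1, (b.equivFun.symm (S q.1 *ᵥ q.2) : F))) (V ×ˢ univ) := by
      have hbf : Continuous (b.equivFun.symm : (Fin d → ℝ) →ₗ[ℝ] F) :=
        LinearMap.continuous_of_finiteDimensional _
      have hmv : ContinuousOn (fun q : X × (Fin N → ℝ) => S q.1 *ᵥ q.2) (V ×ˢ univ) :=
        contOn_matrix_mulVec (hScont.comp continuousOn_fst (fun q hq => hq.1)) continuousOn_snd
      exact continuousOn_fst.prodMk (hbf.comp_continuousOn hmv)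
    have := e.continuousOn_symm.comp hinner (fun q hq => ⟨hVbase _ hq.1, trivial⟩)
    refine this.congr ?_
    intro q hq
    simp [hρ, e.coe_symmₗ (hVbase _ hq.1)]
  · -- left inverse property
    intro x hx w
    have hxb := hVbase x hx
    have hkey2 : g x w = M x *ᵥ (b.equivFun (e.linearMapAt ℝ x w)) := by
      rw [key]
      congr 1
      rw [LinearEquiv.symm_apply_apply]
      exact (e.symmₗ_linearMapAt hxb w).symm
    rw [hρ]
    simp only [LinearMap.coe_comp, Function.comp_apply, mulVecLin_apply]
    rw [hkey2, Matrix.mulVec_mulVec, hSM x hx, Matrix.one_mulVec]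
    have hbe : (b.equivFun.symm : (Fin d → ℝ) →ₗ[ℝ] F) (b.equivFun (e.linearMapAt ℝ x w))
        = e.linearMapAt ℝ x w := b.equivFun.symm_apply_apply _
    rw [hbe]
    exact e.symmₗ_linearMapAt hxb w

set_option maxHeartbeats 1000000 in
theorem stmt19_glue {X F : Type*} [TopologicalSpace X] [ParacompactSpace X] [T2Space X]
    [NormedAddCommGroup F] [NormedSpace ℝ F] [FiniteDimensional ℝ F]
    (W : X → Type*) [∀ x, AddCommGroup (W x)] [∀ x, Module ℝ (W x)]
    [∀ x, TopologicalSpace (W x)] [TopologicalSpace (Bundle.TotalSpace F W)]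
    [FiberBundle F W] [VectorBundle ℝ F W]
    {N : ℕ} (g : ∀ x : X, W x →ₗ[ℝ] (Fin N → ℝ))
    (hgc : Continuous (fun p : Bundle.TotalSpace F W => (p.proj, g p.proj p.2)))
    (hginj : ∀ x, Function.Injective (g x)) :
    ∃ r : ∀ x : X, (Fin N → ℝ) →ₗ[ℝ] W x,
      Continuous (fun q : X × (Fin N → ℝ) =>
        (Bundle.TotalSpace.mk q.1 (r q.1 q.2) : Bundle.TotalSpace F W)) ∧
      ∀ x, (r x) ∘ₗ (g x) = LinearMap.id := by
  classical
  -- choose local data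
  choose V hVopen hVmem ρ hρc hρinv using stmt19_local W g hgc hginj
  -- partition of unity subordinate to V
  obtain ⟨ψ, hψ⟩ := PartitionOfUnity.exists_isSubordinate isClosed_univ V hVopen
    (fun x _ => mem_iUnion.2 ⟨x, hVmem x⟩)
  have hψV : ∀ a x, ψ a x ≠ 0 → x ∈ V a := fun a x h =>
    hψ a (subset_closure (by exact h))
  set r : ∀ x : X, (Fin N → ℝ) →ₗ[ℝ] W x := fun x => ∑ᶠ a, ψ a x • ρ a x with hr
  have hsupp : ∀ x : X, (support fun a => ψ a x • ρ a x) ⊆ {a | ψ a x ≠ 0} := by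
    intro x a ha
    simp only [mem_setOf_eq]
    intro h0
    exact ha (by simp [h0])
  have hptfin : ∀ x : X, ({a | ψ a x ≠ 0} : Set X).Finite := by
    intro x
    exact (ψ.locallyFinite.point_finite x).subset (fun a ha => ha)
  refine ⟨r, ?_, ?_⟩
  · -- continuity
    rw [continuous_iff_continuousAt]
    rintro ⟨x₀, v₀⟩
    set e : Trivialization F (Bundle.TotalSpace.proj : Bundle.TotalSpace F W → X) :=
      trivializationAt F W x₀ with he
    have hx₀b : x₀ ∈ e.baseSet := FiberBundle.mem_baseSet_trivializationAt F W x₀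
    obtain ⟨O₀, hO₀nhds, hO₀fin⟩ := ψ.locallyFinite x₀
    set t : Finset X := hO₀fin.toFinset with htdef
    set ts : Finset X := t.filter (fun a => x₀ ∈ tsupport (ψ a)) with htsdef
    set O : Set X := interior O₀ ∩ e.baseSet ∩
        (⋂ a ∈ t.filter (fun a => x₀ ∉ tsupport (ψ a)), (tsupport (ψ a))ᶜ) ∩
        (⋂ a ∈ ts, V a) with hOdef
    have hOopen : IsOpen O := by
      refine ((isOpen_interior.inter e.open_baseSet).inter ?_).inter ?_
      · exact isOpen_biInter_finset (fun a _ => (isClosed_tsupport _).isOpen_compl)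
      · exact isOpen_biInter_finset (fun a _ => hVopen a)
    have hx₀O : x₀ ∈ O := by
      refine ⟨⟨⟨mem_interior_iff_mem_nhds.2 hO₀nhds, hx₀b⟩, ?_⟩, ?_⟩
      · simp only [mem_iInter]
        intro a ha
        simp only [Finset.mem_filter] at ha
        exact ha.2
      · simp only [mem_iInter]
        intro a ha
        simp only [htsdef, Finset.mem_filter] at ha
        exact hψ a ha.2
    have hObase : ∀ x ∈ O, x ∈ e.baseSet := fun x hx => hx.1.1.2
    have hOV : ∀ a ∈ ts, ∀ x ∈ O, x ∈ V a := by
      intro a ha x hx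
      have h := hx.2
      simp only [mem_iInter] at h
      exact h a ha
    have hrO : ∀ x ∈ O, r x = ∑ a ∈ ts, ψ a x • ρ a x := by
      intro x hx
      apply finsum_eq_sum_of_support_subset
      intro a ha
      have hne : ψ a x ≠ 0 := hsupp x ha
      have hxsupp : x ∈ support (ψ a) := hne
      have hat : a ∈ t := by
        rw [htdef, Set.Finite.mem_toFinset]
        exact ⟨x, hxsupp, interior_subset hx.1.1.1⟩
      rw [Finset.mem_coe, htsdef, Finset.mem_filter]
      refine ⟨hat, ?_⟩
      by_contra hnot
      have hmem : x ∈ (tsupport (ψ a))ᶜ := by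
        have h := hx.1.2
        simp only [mem_iInter] at h
        exact h a (Finset.mem_filter.2 ⟨hat, hnot⟩)
      exact hmem (subset_closure hxsupp)
    set χ : X × (Fin N → ℝ) → F := fun q =>
      ∑ a ∈ ts, ψ a q.1 • (e (Bundle.TotalSpace.mk q.1 (ρ a q.1 q.2))).2 with hχdef
    have hχc : ContinuousOn χ (O ×ˢ univ) := by
      apply continuousOn_finset_sum
      intro a ha
      have h1 : ContinuousOn (fun q : X × (Fin N → ℝ) =>
          (Bundle.TotalSpace.mk q.1 (ρ a q.1 q.2) : Bundle.TotalSpace F W)) (O ×ˢ univ) :=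
        (hρc a).mono (prod_mono_left (fun x hx => hOV a ha x hx))
      have h2 : ContinuousOn (fun q : X × (Fin N → ℝ) =>
          (e (Bundle.TotalSpace.mk q.1 (ρ a q.1 q.2))).2) (O ×ˢ univ) := by
        apply continuous_snd.comp_continuousOn
        exact e.continuousOn.comp h1 (fun q hq => e.mem_source.2 (hObase _ hq.1))
      exact (((ψ a).continuous.comp continuous_fst).continuousOn).smul h2
    have hkey : EqOn
        (fun q : X × (Fin N → ℝ) =>
          (Bundle.TotalSpace.mk q.1 (r q.1 q.2) : Bundle.TotalSpace F W))
        (fun q : X × (Fin N → ℝ) =>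
          (Bundle.TotalSpace.mk q.1 (e.symm q.1 (χ q)) : Bundle.TotalSpace F W))
        (O ×ˢ univ) := by
      rintro ⟨x, v⟩ ⟨hx, -⟩
      have hxb : x ∈ e.baseSet := hObase x hx
      have h1 : χ (x, v) = e.linearMapAt ℝ x (r x v) := by
        have hsum : r x v = ∑ a ∈ ts, ψ a x • ρ a x v := by
          rw [hrO x hx]
          simp [LinearMap.sum_apply]
        rw [hsum, map_sum]
        apply Finset.sum_congr rfl
        intro a _
        rw [_root_.map_smul]
        congr 1
        rw [e.coe_linearMapAt_of_mem hxb]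
      have h2 : e.symm x (χ (x, v)) = r x v := by
        rw [h1, ← Trivialization.coe_symmₗ (R := ℝ) e hxb]
        exact e.symmₗ_linearMapAt hxb _
      simp only
      rw [h2]
    have hcont2 : ContinuousOn (fun q : X × (Fin N → ℝ) =>
        (Bundle.TotalSpace.mk q.1 (e.symm q.1 (χ q)) : Bundle.TotalSpace F W)) (O ×ˢ univ) :=
      e.continuousOn_symm.comp (continuousOn_fst.prodMk hχc)
        (fun q hq => ⟨hObase _ hq.1, trivial⟩)
    exact (hcont2.congr hkey).continuousAt
      (prod_mem_nhds (hOopen.mem_nhds hx₀O) Filter.univ_mem)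
  · -- left inverse
    intro x
    apply LinearMap.ext
    intro w
    set t : Finset X := (hptfin x).toFinset with ht
    have hsub : (support fun a => ψ a x • ρ a x) ⊆ (t : Set X) := by
      intro a ha
      simpa [ht] using hsupp x ha
    have hrx : r x = ∑ a ∈ t, ψ a x • ρ a x := finsum_eq_sum_of_support_subset _ hsub
    have h1 : r x (g x w) = ∑ a ∈ t, ψ a x • ρ a x (g x w) := by
      rw [hrx]
      simp [LinearMap.sum_apply]
    have h2 : ∀ a ∈ t, ψ a x • ρ a x (g x w) = ψ a x • w := by
      intro a _
      by_cases h0 : ψ a x = 0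
      · simp [h0]
      · rw [hρinv a x (hψV a x h0) w]
    have h3 : (∑ a ∈ t, ψ a x) = 1 := by
      rw [← ψ.sum_eq_one (mem_univ x)]
      exact (finsum_eq_sum_of_support_subset _
        (by intro a ha; simpa [ht] using ha)).symm
    simp only [LinearMap.coe_comp, Function.comp_apply, LinearMap.id_coe, id_eq]
    rw [h1, Finset.sum_congr rfl h2, ← Finset.sum_smul, h3, one_smul]

set_option maxHeartbeats 1000000

/-- Let `X` be paracompact Hausdorff with a finite open cover `(Uᵢ)`, `W` a real vector
bundle over `X`, and for each `i` a continuous fiberwise-injective vector bundle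
morphism `fᵢ : W|_{Uᵢ} → Uᵢ × ℝ^{nᵢ}`.  Then there is a continuous fiberwise-injective
vector bundle morphism `W → X × ℝ^N` with `N = ∑ nᵢ`; consequently `W` is a direct
summand of the trivial bundle `X × ℝ^N` (there is a continuous bundle retraction). -/
theorem stmt_19 {X F : Type*} [TopologicalSpace X] [ParacompactSpace X] [T2Space X]
    [NormedAddCommGroup F] [NormedSpace ℝ F]
    (W : X → Type*) [∀ x, AddCommGroup (W x)] [∀ x, Module ℝ (W x)]
    [∀ x, TopologicalSpace (W x)] [TopologicalSpace (Bundle.TotalSpace F W)]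
    [FiberBundle F W] [VectorBundle ℝ F W]
    {m : ℕ} (U : Fin m → Set X)
    (hUopen : ∀ i, IsOpen (U i)) (hUcover : ∀ x, ∃ i, x ∈ U i)
    (n : Fin m → ℕ)
    (f : ∀ (i : Fin m) (x : X), W x →ₗ[ℝ] (Fin (n i) → ℝ))
    (hfc : ∀ i, ContinuousOn
      (fun p : Bundle.TotalSpace F W => (p.proj, f i p.proj p.2))
      (Bundle.TotalSpace.proj ⁻¹' U i))
    (hfinj : ∀ i, ∀ x ∈ U i, Function.Injective (f i x)) :
    ∃ g : ∀ x : X, W x →ₗ[ℝ] (Fin (∑ i, n i) → ℝ),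
      Continuous (fun p : Bundle.TotalSpace F W => (p.proj, g p.proj p.2)) ∧
      (∀ x, Function.Injective (g x)) ∧
      ∃ r : ∀ x : X, (Fin (∑ i, n i) → ℝ) →ₗ[ℝ] W x,
        Continuous (fun q : X × (Fin (∑ i, n i) → ℝ) =>
          (Bundle.TotalSpace.mk q.1 (r q.1 q.2) : Bundle.TotalSpace F W)) ∧
        ∀ x, (r x) ∘ₗ (g x) = LinearMap.id := by
  classical
  cases isEmpty_or_nonempty X with
  | inl hX =>
    have hempty : IsEmpty (Bundle.TotalSpace F W) := ⟨fun p => isEmptyElim p.proj⟩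
    have hempty2 : IsEmpty (X × (Fin (∑ i, n i) → ℝ)) := ⟨fun q => isEmptyElim q.1⟩
    refine ⟨fun x => isEmptyElim x, ?_, fun x => isEmptyElim x,
      fun x => isEmptyElim x, ?_, fun x => isEmptyElim x⟩
    · exact continuous_iff_continuousAt.2 (fun p => isEmptyElim p)
    · exact continuous_iff_continuousAt.2 (fun q => isEmptyElim q)
  | inr hX =>
    -- F is finite dimensional
    have hFfin : FiniteDimensional ℝ F := by
      obtain ⟨x⟩ := hX
      obtain ⟨i, hxU⟩ := hUcover x
      have h1 : FiniteDimensional ℝ (W x) :=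
        FiniteDimensional.of_injective (f i x) (hfinj i x hxU)
      have e2 : W x ≃ₗ[ℝ] F :=
        (trivializationAt F W x).linearEquivAt ℝ x
          (FiberBundle.mem_baseSet_trivializationAt F W x)
      exact Module.Finite.equiv e2
    -- partition of unity subordinate to U
    obtain ⟨φ, hφ⟩ := PartitionOfUnity.exists_isSubordinate (s := univ)
      isClosed_univ U hUopen (fun x _ => mem_iUnion.2 (hUcover x))
    have hφU : ∀ i x, φ i x ≠ 0 → x ∈ U i := fun i x h =>
      hφ i (subset_closure (by exact h))
    -- index equivalence
    set σ : (Σ i : Fin m, Fin (n i)) ≃ Fin (∑ i, n i) :=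
      Fintype.equivFinOfCardEq (by simp) with hσ
    -- the global injective morphism
    set g : ∀ x : X, W x →ₗ[ℝ] (Fin (∑ i, n i) → ℝ) := fun x =>
      LinearMap.pi (fun j => (φ (σ.symm j).1 x) •
        ((LinearMap.proj (σ.symm j).2).comp (f (σ.symm j).1 x))) with hg
    have hgapp : ∀ x (w : W x) (i : Fin m) (k : Fin (n i)),
        g x w (σ ⟨i, k⟩) = φ i x • f i x w k := by
      intro x w i k
      rw [hg]
      simp only [LinearMap.pi_apply, LinearMap.smul_apply, LinearMap.coe_comp,
        Function.comp_apply, LinearMap.proj_apply]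
      rw [show σ.symm (σ ⟨i, k⟩) = ⟨i, k⟩ from σ.symm_apply_apply _]
    -- continuity of g
    have hblock : ∀ (i : Fin m) (k : Fin (n i)),
        Continuous fun p : Bundle.TotalSpace F W => φ i p.proj • f i p.proj p.2 k := by
      intro i k
      rw [continuous_iff_continuousAt]
      intro p
      by_cases hp : p.proj ∈ U i
      · have h1 : ContinuousOn (fun p : Bundle.TotalSpace F W => f i p.proj p.2 k)
            (Bundle.TotalSpace.proj ⁻¹' U i) := by
          have := (continuous_apply k).comp_continuousOn
            (continuous_snd.comp_continuousOn (hfc i))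
          exact this
        have hopen : IsOpen (Bundle.TotalSpace.proj ⁻¹' U i : Set (Bundle.TotalSpace F W)) :=
          (hUopen i).preimage (FiberBundle.continuous_proj F W)
        have h2 : ContinuousAt (fun p : Bundle.TotalSpace F W => f i p.proj p.2 k) p :=
          h1.continuousAt (hopen.mem_nhds hp)
        exact (((φ i).continuous.comp
          (FiberBundle.continuous_proj F W)).continuousAt).smul h2
      · have hcl : p.proj ∉ tsupport (φ i) := fun hc => hp (hφ i hc)
        have hopen : IsOpen (Bundle.TotalSpace.proj ⁻¹' (tsupport (φ i))ᶜ :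
            Set (Bundle.TotalSpace F W)) :=
          (isClosed_tsupport _).isOpen_compl.preimage (FiberBundle.continuous_proj F W)
        have hev : (fun p : Bundle.TotalSpace F W => φ i p.proj • f i p.proj p.2 k)
            =ᶠ[nhds p] fun _ => (0 : ℝ) := by
          refine Filter.eventually_of_mem (hopen.mem_nhds hcl) ?_
          intro q hq
          have : φ i q.proj = 0 := image_eq_zero_of_notMem_tsupport hq
          simp [this]
        exact hev.continuousAt
    have hgc : Continuous (fun p : Bundle.TotalSpace F W => (p.proj, g p.proj p.2)) := by
      refine (FiberBundle.continuous_proj F W).prodMk ?_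
      refine continuous_pi ?_
      intro j
      have : (fun p : Bundle.TotalSpace F W => g p.proj p.2 j)
          = fun p => φ (σ.symm j).1 p.proj • f (σ.symm j).1 p.proj p.2 (σ.symm j).2 := by
        funext p
        rw [hg]
        simp [LinearMap.pi_apply]
      rw [this]
      exact hblock _ _
    -- injectivity of g
    have hginj : ∀ x, Function.Injective (g x) := by
      intro x w w' hww
      obtain ⟨i, hi⟩ : ∃ i, φ i x ≠ 0 := by
        by_contra hnone
        push_neg at hnone
        have := φ.sum_eq_one (mem_univ x)
        rw [finsum_eq_zero_of_forall_eq_zero (fun i => hnone i)] at this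
        exact one_ne_zero this.symm
      have hxU : x ∈ U i := hφU i x hi
      apply hfinj i x hxU
      funext k
      have h1 := congrFun hww (σ ⟨i, k⟩)
      rw [hgapp x w i k, hgapp x w' i k] at h1
      exact mul_left_cancel₀ hi h1
    obtain ⟨r, hrc, hrinv⟩ := stmt19_glue W g hgc hginj
    exact ⟨g, hgc, hginj, r, hrc, hrinv⟩
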